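/- Let m ≥ 4 be even and θ_1, ..., θ_m ∈ (0, π) dihedral angles summing to 2π around an interior edge, with sin(θ_1 + θ_2) ≠ 0 and sin(θ_1 + θ_m) having the same sign as sin(θ_1 + θ_2) (e.g., both angle sums in (0, π)). Define β = (cot θ_1 + cot θ_m)/(cot θ_1 + cot θ_2) = sin θ_2 sin(θ_1 + θ_m) / (sin θ_m sin(θ_1 + θ_2)). Then β > 0, and there exists a normal-continuous piecewise-constant symmetric tensor field T on the patch with n_1^T T n_1 = 1, n_2^T T n_2 = β, and n_j^T T n_j = 0 for j = 3, ..., m; explicitly T n_1 = n_1, T n_2 = β n_2 + (1-β) cot(θ_1) t_2, T n_3 = cot(θ_m) t_3, and T n_j = (-1)^{j-3} cot(θ_m) t_j for j ≥ 3. -/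

import Mathlib

open Matrix

lemma vmv_mulVec (w v x : Fin 3 → ℝ) :
    Matrix.vecMulVec w v *ᵥ x = (v ⬝ᵥ x) • w := by
  funext i
  simp [Matrix.vecMulVec_apply, Matrix.mulVec, dotProduct, Finset.mul_sum, mul_assoc,
    mul_comm, mul_left_comm]

lemma vmv_transpose (w v : Fin 3 → ℝ) :
    (Matrix.vecMulVec w v)ᵀ = Matrix.vecMulVec v w := by
  ext i k; simp [Matrix.vecMulVec_apply, mul_comm]


/-- Even non-singular case: with
`β = (cot θ_1 + cot θ_m)/(cot θ_1 + cot θ_2) = sin θ_2 sin(θ_1+θ_m)/(sin θ_m sin(θ_1+θ_2)) > 0`,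
there is a normal-continuous piecewise-constant symmetric tensor field `T` with
`n_1ᵀ T n_1 = 1`, `n_2ᵀ T n_2 = β`, `n_jᵀ T n_j = 0` for `j ≥ 3`, given explicitly by
`T n_1 = n_1`, `T n_2 = β n_2 + (1-β) cot(θ_1) t_2`, `T n_j = (-1)^{j-3} cot(θ_m) t_j`. -/
theorem stmt10 (m : ℕ) [NeZero m] (hm : 4 ≤ m) (hme : Even m)
    (θ : Fin m → ℝ) (hθ : ∀ j, θ j ∈ Set.Ioo 0 Real.pi)
    (hsum : ∑ j, θ j = 2 * Real.pi)
    (n t : Fin m → Fin 3 → ℝ)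
    (hn : ∀ j, n j ⬝ᵥ n j = 1) (htj : ∀ j, t j ⬝ᵥ t j = 1)
    (hnt : ∀ j, n j ⬝ᵥ t j = 0)
    (hrot1 : ∀ j, n (j + 1) = Real.cos (θ j) • n j - Real.sin (θ j) • t j)
    (hrot2 : ∀ j, n j = Real.cos (θ j) • n (j + 1) + Real.sin (θ j) • t (j + 1))
    (hns : Real.cos (θ 0) / Real.sin (θ 0) + Real.cos (θ 1) / Real.sin (θ 1) ≠ 0)
    (hsin12 : Real.sin (θ 0 + θ 1) ≠ 0)
    (hsign : 0 < Real.sin (θ 0 + θ (-1)) * Real.sin (θ 0 + θ 1))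
    (β : ℝ)
    (hβ : β = (Real.cos (θ 0) / Real.sin (θ 0) + Real.cos (θ (-1)) / Real.sin (θ (-1))) /
        (Real.cos (θ 0) / Real.sin (θ 0) + Real.cos (θ 1) / Real.sin (θ 1)))
    (hβ' : β = Real.sin (θ 1) * Real.sin (θ 0 + θ (-1)) /
        (Real.sin (θ (-1)) * Real.sin (θ 0 + θ 1))) :
    0 < β ∧
    ∃ T : Fin m → Matrix (Fin 3) (Fin 3) ℝ,
      (∀ j, (T j).IsSymm) ∧
      (∀ j, T j *ᵥ n (j + 1) = T (j + 1) *ᵥ n (j + 1)) ∧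
      T 0 *ᵥ n 0 = n 0 ∧
      T 1 *ᵥ n 1 = β • n 1 + ((1 - β) * (Real.cos (θ 0) / Real.sin (θ 0))) • t 1 ∧
      (∀ j : Fin m, 2 ≤ (j : ℕ) →
        T j *ᵥ n j = ((-1 : ℝ) ^ ((j : ℕ) - 2) * (Real.cos (θ (-1)) / Real.sin (θ (-1)))) • t j) ∧
      n 0 ⬝ᵥ (T 0 *ᵥ n 0) = 1 ∧
      n 1 ⬝ᵥ (T 1 *ᵥ n 1) = β ∧
      (∀ j : Fin m, 2 ≤ (j : ℕ) → n j ⬝ᵥ (T j *ᵥ n j) = 0) := by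

  have hS : ∀ j, 0 < Real.sin (θ j) := fun j =>
    Real.sin_pos_of_pos_of_lt_pi (hθ j).1 (hθ j).2
  have hS' : ∀ j, Real.sin (θ j) ≠ 0 := fun j => (hS j).ne'
  -- positivity of β
  have hβpos : 0 < β := by
    have h2 : 0 < (Real.sin (θ 1) * Real.sin (θ 0 + θ (-1)))
        * (Real.sin (θ (-1)) * Real.sin (θ 0 + θ 1)) := by
      nlinarith [mul_pos (hS 1) (hS (-1)), hsign]
    rw [hβ', div_pos_iff]
    rcases mul_pos_iff.mp h2 with ⟨ha, hb⟩ | ⟨ha, hb⟩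
    · exact Or.inl ⟨ha, hb⟩
    · exact Or.inr ⟨ha, hb⟩
  -- Fin arithmetic facts
  have hv0 : ((0 : Fin m)).val = 0 := rfl
  have hv1 : ((1 : Fin m)).val = 1 := by
    rw [Fin.val_one']; exact Nat.mod_eq_of_lt (by omega)
  have hvneg : ((-1 : Fin m)).val = m - 1 := by
    simp [Fin.neg_def, Fin.sub_def, Fin.val_one', Nat.mod_eq_of_lt (show 1 < m by omega)]
  have hvadd : ∀ j : Fin m, ((j + 1 : Fin m)).val = (j.val + 1) % m := by
    intro j
    rw [Fin.val_add, hv1]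
  -- the coefficient functions
  set c0 : ℝ := Real.cos (θ 0) / Real.sin (θ 0) with hc0
  set cm : ℝ := Real.cos (θ (-1)) / Real.sin (θ (-1)) with hcm
  set A : Fin m → ℝ := fun j => if j.val = 0 then 1 else if j.val = 1 then β else 0 with hA
  set B : Fin m → ℝ := fun j => if j.val = 0 then 0 else if j.val = 1 then (1 - β) * c0
      else (-1 : ℝ) ^ (j.val - 2) * cm with hB
  set G : Fin m → ℝ := fun j => (A (j + 1) - A j * Real.cos (θ j) ^ 2
      + 2 * B j * Real.cos (θ j) * Real.sin (θ j)) / Real.sin (θ j) ^ 2 with hG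
  set T : Fin m → Matrix (Fin 3) (Fin 3) ℝ := fun j =>
      A j • Matrix.vecMulVec (n j) (n j)
      + B j • (Matrix.vecMulVec (n j) (t j) + Matrix.vecMulVec (t j) (n j))
      + G j • Matrix.vecMulVec (t j) (t j) with hT
  -- values of A and B
  have hAB0 : ∀ j : Fin m, j.val = 0 → A j = 1 ∧ B j = 0 := by
    intro j h; constructor <;> simp only [hA, hB, h] <;> simp
  have hAB1 : ∀ j : Fin m, j.val = 1 → A j = β ∧ B j = (1 - β) * c0 := by
    intro j h; constructor <;> simp only [hA, hB, h] <;> simp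
  have hAB2 : ∀ j : Fin m, 2 ≤ j.val → A j = 0 ∧ B j = (-1 : ℝ) ^ (j.val - 2) * cm := by
    intro j h
    constructor <;>
      simp only [hA, hB, show ¬ (j.val = 0) by omega, show ¬ (j.val = 1) by omega] <;> simp
  -- basic cotangent identities
  have hc0s : c0 * Real.sin (θ 0) = Real.cos (θ 0) := div_mul_cancel₀ _ (hS' 0)
  have hcms : cm * Real.sin (θ (-1)) = Real.cos (θ (-1)) := div_mul_cancel₀ _ (hS' (-1))
  have hc1s : Real.cos (θ 1) / Real.sin (θ 1) * Real.sin (θ 1) = Real.cos (θ 1) :=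
    div_mul_cancel₀ _ (hS' 1)
  have hβc : β * (c0 + Real.cos (θ 1) / Real.sin (θ 1)) = c0 + cm := by
    rw [hβ]; exact div_mul_cancel₀ _ hns
  -- the key scalar relation
  have hkey : ∀ j : Fin m,
      (B (j + 1) + B j) * Real.sin (θ j) = (A j - A (j + 1)) * Real.cos (θ j) := by
    intro j
    have hjm := j.isLt
    by_cases h0 : j.val = 0
    · have hj : j = 0 := Fin.ext (by rw [h0, hv0])
      subst hj
      have h1' : ((0 + 1 : Fin m)).val = 1 := by
        rw [hvadd, hv0]; exact Nat.mod_eq_of_lt (by omega)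
      rw [(hAB0 0 hv0).1, (hAB0 0 hv0).2, (hAB1 _ h1').1, (hAB1 _ h1').2]
      linear_combination (1 - β) * hc0s
    · by_cases h1 : j.val = 1
      · have hj : j = 1 := Fin.ext (by rw [h1, hv1])
        subst hj
        have h2' : ((1 + 1 : Fin m)).val = 2 := by
          rw [hvadd, hv1]; exact Nat.mod_eq_of_lt (by omega)
        rw [(hAB1 1 hv1).1, (hAB1 1 hv1).2, (hAB2 _ (by omega)).1, (hAB2 _ (by omega)).2,
          h2']
        norm_num
        linear_combination (-Real.sin (θ 1)) * hβc + β * hc1s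
      · by_cases hl : j.val = m - 1
        · have hj : j = -1 := Fin.ext (by rw [hl, hvneg])
          subst hj
          have h0' : ((-1 + 1 : Fin m)).val = 0 := by
            rw [hvadd, hvneg, show m - 1 + 1 = m by omega, Nat.mod_self]
          have hodd : ((-1 : ℝ)) ^ (m - 1 - 2) = -1 := by
            apply Odd.neg_one_pow
            rcases hme with ⟨k, hk⟩
            exact ⟨k - 2, by omega⟩
          rw [(hAB0 _ h0').1, (hAB0 _ h0').2, (hAB2 _ (by omega : 2 ≤ ((-1 : Fin m)).val)).1,
            (hAB2 _ (by omega : 2 ≤ ((-1 : Fin m)).val)).2, hvneg, hodd]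
          linear_combination (-1 : ℝ) * hcms
        · -- middle case
          have h2 : 2 ≤ j.val := by omega
          have hlt : j.val + 1 < m := by omega
          have h1' : ((j + 1 : Fin m)).val = j.val + 1 := by
            rw [hvadd]; exact Nat.mod_eq_of_lt hlt
          rw [(hAB2 j h2).1, (hAB2 j h2).2, (hAB2 (j + 1) (by omega)).1,
            (hAB2 (j + 1) (by omega)).2, h1',
            show j.val + 1 - 2 = (j.val - 2) + 1 by omega, pow_succ]
          ring
  -- dot product helpers
  have htn : ∀ j, t j ⬝ᵥ n j = 0 := fun j => by rw [dotProduct_comm]; exact hnt j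
  have hCn : ∀ j, n j ⬝ᵥ n (j + 1) = Real.cos (θ j) := by
    intro j; rw [hrot1 j]
    simp [dotProduct_sub, dotProduct_smul, hn j, hnt j]
  have hCt : ∀ j, t j ⬝ᵥ n (j + 1) = -Real.sin (θ j) := by
    intro j; rw [hrot1 j]
    simp [dotProduct_sub, dotProduct_smul, htj j, htn j]
  have hTmul : ∀ j x, T j *ᵥ x =
      (A j * (n j ⬝ᵥ x) + B j * (t j ⬝ᵥ x)) • n j
      + (B j * (n j ⬝ᵥ x) + G j * (t j ⬝ᵥ x)) • t j := by
    intro j x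
    simp only [hT, Matrix.add_mulVec, Matrix.smul_mulVec, vmv_mulVec]
    match_scalars <;> ring
  -- diagonal actions
  have hT0 : T 0 *ᵥ n 0 = n 0 := by
    rw [hTmul, hn 0, htn 0, (hAB0 0 hv0).1, (hAB0 0 hv0).2]
    match_scalars <;> ring
  have hT1 : T 1 *ᵥ n 1 = β • n 1 + ((1 - β) * c0) • t 1 := by
    rw [hTmul, hn 1, htn 1, (hAB1 1 hv1).1, (hAB1 1 hv1).2]
    match_scalars <;> ring
  have hTj : ∀ j : Fin m, 2 ≤ (j : ℕ) →
      T j *ᵥ n j = ((-1 : ℝ) ^ ((j : ℕ) - 2) * cm) • t j := by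
    intro j hj
    rw [hTmul, hn j, htn j, (hAB2 j hj).1, (hAB2 j hj).2]
    match_scalars <;> ring
  -- symmetry
  have hsym : ∀ j, (T j).IsSymm := by
    intro j
    unfold Matrix.IsSymm
    simp only [hT, Matrix.transpose_add, Matrix.transpose_smul, vmv_transpose]
    rw [add_comm (Matrix.vecMulVec (t j) (n j))]
  -- continuity
  have hcont : ∀ j, T j *ᵥ n (j + 1) = T (j + 1) *ᵥ n (j + 1) := by
    intro j
    have hpy : Real.sin (θ j) ^ 2 + Real.cos (θ j) ^ 2 = 1 := Real.sin_sq_add_cos_sq _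
    have ht' : t (j + 1) = Real.sin (θ j) • n j + Real.cos (θ j) • t j := by
      apply smul_right_injective (Fin 3 → ℝ) (hS' j)
      show Real.sin (θ j) • t (j + 1) = Real.sin (θ j) • _
      have h1 := hrot2 j
      rw [hrot1 j] at h1
      have h3 : Real.sin (θ j) • t (j + 1)
          = (1 - Real.cos (θ j) * Real.cos (θ j)) • n j
            + (Real.cos (θ j) * Real.sin (θ j)) • t j := by
        linear_combination (norm := module) (-1 : ℝ) • h1
      rw [h3]
      match_scalars
      · linear_combination -hpy
      · ring
    have hL : T j *ᵥ n (j + 1) =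
        (A j * Real.cos (θ j) + B j * (-Real.sin (θ j))) • n j
        + (B j * Real.cos (θ j) + G j * (-Real.sin (θ j))) • t j := by
      rw [hTmul, hCn j, hCt j]
    have hR : T (j + 1) *ᵥ n (j + 1) =
        (A (j + 1) * Real.cos (θ j) + B (j + 1) * Real.sin (θ j)) • n j
        + (-(A (j + 1)) * Real.sin (θ j) + B (j + 1) * Real.cos (θ j)) • t j := by
      rw [hTmul, hn (j + 1), htn (j + 1)]
      rw [hrot1 j, ht']
      match_scalars <;> ring
    have hGj : G j * Real.sin (θ j) ^ 2 = A (j + 1) - A j * Real.cos (θ j) ^ 2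
        + 2 * B j * Real.cos (θ j) * Real.sin (θ j) := by
      rw [hG]
      exact div_mul_cancel₀ _ (pow_ne_zero 2 (hS' j))
    rw [hL, hR]
    have e1 : A j * Real.cos (θ j) + B j * (-Real.sin (θ j))
        = A (j + 1) * Real.cos (θ j) + B (j + 1) * Real.sin (θ j) := by
      linear_combination (-1 : ℝ) * hkey j
    have e2 : B j * Real.cos (θ j) + G j * (-Real.sin (θ j))
        = -(A (j + 1)) * Real.sin (θ j) + B (j + 1) * Real.cos (θ j) := by
      have hs := hS' j
      have hmul : (B j * Real.cos (θ j) + G j * (-Real.sin (θ j))) * Real.sin (θ j)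
          = (-(A (j + 1)) * Real.sin (θ j) + B (j + 1) * Real.cos (θ j)) * Real.sin (θ j) := by
        linear_combination (-Real.cos (θ j)) * hkey j - hGj + A (j + 1) * hpy
      exact mul_right_cancel₀ hs hmul
    rw [e1, e2]
  refine ⟨hβpos, T, hsym, hcont, hT0, hT1, hTj, ?_, ?_, ?_⟩
  · rw [hT0, hn 0]
  · rw [hT1]
    simp [dotProduct_add, dotProduct_smul, hn 1, hnt 1]
  · intro j hj
    rw [hTj j hj]
    simp [dotProduct_smul, hnt j]
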